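/- Let γ ≤ 0 and suppose S ≤ 0. Then Z ≤ γ if and only if (1 + γ²/n)·S² − γ²·Q ≥ 0. (Case 2 of the feasibility reformulation of the minimization Z-test.) -/

import Mathlib

theorem stmt_1 (n : ℕ) (hn : 1 ≤ n) (t : Fin n → ℝ)
    (S Q σ Z : ℝ)
    (hS : S = ∑ k, t k) (hQ : Q = ∑ k, (t k) ^ 2)
    (hσ : σ = Real.sqrt (Q / n - (S / n) ^ 2)) (hσpos : 0 < σ)
    (hZ : Z = S / (Real.sqrt n * σ))
    (γ : ℝ) (hγ : γ ≤ 0) (hSneg : S ≤ 0) :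
    Z ≤ γ ↔ 0 ≤ (1 + γ ^ 2 / n) * S ^ 2 - γ ^ 2 * Q := by
  have hn0 : (0:ℝ) < n := by exact_mod_cast hn
  have hn' : (n:ℝ) ≠ 0 := hn0.ne'
  have hsn : 0 < Real.sqrt n := Real.sqrt_pos.mpr hn0
  have hsn2 : Real.sqrt n ^ 2 = n := Real.sq_sqrt hn0.le
  have hxnn : 0 ≤ Q / n - (S / n) ^ 2 := by
    by_contra h
    push_neg at h
    rw [hσ, Real.sqrt_eq_zero_of_nonpos h.le] at hσpos
    exact lt_irrefl 0 hσpos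
  have hσ2 : σ ^ 2 = Q / n - (S / n) ^ 2 := by rw [hσ, Real.sq_sqrt hxnn]
  have hσ2n : σ ^ 2 * n ^ 2 = Q * n - S ^ 2 := by
    rw [hσ2]
    field_simp
  have hns : 0 < Real.sqrt n * σ := mul_pos hsn hσpos
  have hb : γ * (Real.sqrt n * σ) ≤ 0 := mul_nonpos_of_nonpos_of_nonneg hγ hns.le
  have hkey : (n:ℝ) * ((1 + γ ^ 2 / n) * S ^ 2 - γ ^ 2 * Q)
      = ((n:ℝ) + γ ^ 2) * S ^ 2 - n * γ ^ 2 * Q := by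
    field_simp
  have hgoal_iff : (0 ≤ (1 + γ ^ 2 / n) * S ^ 2 - γ ^ 2 * Q)
      ↔ 0 ≤ ((n:ℝ) + γ ^ 2) * S ^ 2 - n * γ ^ 2 * Q := by
    rw [← hkey]
    exact (mul_nonneg_iff_of_pos_left hn0).symm
  have h3 : (n:ℝ) * (γ * (Real.sqrt n * σ)) ^ 2 = γ ^ 2 * (Q * n - S ^ 2) := by
    have h4 : (γ * (Real.sqrt n * σ)) ^ 2 = γ ^ 2 * (Real.sqrt n ^ 2) * σ ^ 2 := by ring
    rw [h4, hsn2]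
    linear_combination γ ^ 2 * hσ2n
  rw [hZ, div_le_iff₀ hns, hgoal_iff]
  constructor
  · intro h
    have h2 : (γ * (Real.sqrt n * σ)) ^ 2 ≤ S ^ 2 := by nlinarith
    have h5 : (n:ℝ) * (γ * (Real.sqrt n * σ)) ^ 2 ≤ n * S ^ 2 :=
      mul_le_mul_of_nonneg_left h2 hn0.le
    rw [h3] at h5
    nlinarith
  · intro h
    have h5 : (n:ℝ) * (γ * (Real.sqrt n * σ)) ^ 2 ≤ n * S ^ 2 := by
      rw [h3]; nlinarith
    have h2 : (γ * (Real.sqrt n * σ)) ^ 2 ≤ S ^ 2 := by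
      have := (mul_le_mul_iff_of_pos_left hn0).mp h5
      exact this
    have h6 := Real.sqrt_le_sqrt h2
    rwa [Real.sqrt_sq_eq_abs, Real.sqrt_sq_eq_abs, abs_of_nonpos hb, abs_of_nonpos hSneg,
      neg_le_neg_iff] at h6
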